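/- Variation of the F-functional in the base point (the y-term of the first variation formula, Lemma 3.1 of the paper, with the submanifold and time parameter held fixed): let n be a natural number and let μ be a Borel measure on a finite-dimensional Euclidean space E with polynomial volume growth, i.e. there exist C > 0 and d ≥ 0 with μ(B(0,r)) ≤ C r^d for all r ≥ 1. Then for every fixed t₀ > 0, every x₀ ∈ E and every direction y ∈ E, the function s ↦ F^{(n)}_{x₀ + s y, t₀}(μ) is differentiable at s = 0 with derivative (4π t₀)^{−n/2} ∫_E ( ⟨x − x₀, y⟩ / (2 t₀) ) exp( −‖x − x₀‖² / (4 t₀) ) dμ(x). -/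

import Mathlib

open MeasureTheory Real
open scoped RealInnerProductSpace


/-- Summability of the annulus bounds. -/
lemma summable_annulus_bound (C R c d : ℝ) (hC : 0 ≤ C) (hR : 0 ≤ R) (hc : 0 < c)
    (hd : 0 ≤ d) :
    Summable (fun k : ℕ => Real.exp (-(k : ℝ) ^ 2 / c) * (C * ((k : ℝ) + 1 + R) ^ d)) := by
  set m : ℕ := ⌈d⌉₊ with hm
  set q : ℝ := Real.exp (-(1 / c)) with hq
  have hq0 : 0 < q := Real.exp_pos _
  have hq1 : q < 1 := by
    rw [hq, Real.exp_lt_one_iff]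
    have : 0 < 1 / c := by positivity
    linarith
  have hsum0 : Summable (fun n : ℕ => (n : ℝ) ^ m * q ^ n) :=
    summable_pow_mul_geometric_of_norm_lt_one m (by rwa [Real.norm_eq_abs, abs_of_pos hq0])
  have hsum1 : Summable (fun k : ℕ => ((k : ℝ) + 1) ^ m * q ^ (k + 1)) := by
    have := (summable_nat_add_iff (f := fun n : ℕ => (n : ℝ) ^ m * q ^ n) 1).mpr hsum0
    refine this.congr fun k => ?_
    push_cast
    ring
  have hsum2 : Summable (fun k : ℕ => (C * (1 + R) ^ m * q⁻¹) * (((k : ℝ) + 1) ^ m * q ^ (k + 1))) :=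
    hsum1.mul_left _
  refine Summable.of_nonneg_of_le (fun k => by positivity) (fun k => ?_) hsum2
  have hk0 : (0 : ℝ) ≤ (k : ℝ) := Nat.cast_nonneg k
  have hk1 : (1 : ℝ) ≤ (k : ℝ) + 1 + R := by linarith
  have h1 : ((k : ℝ) + 1 + R) ^ d ≤ ((k : ℝ) + 1 + R) ^ (m : ℝ) :=
    Real.rpow_le_rpow_of_exponent_le hk1 (Nat.le_ceil d)
  have h2 : ((k : ℝ) + 1 + R) ^ (m : ℝ) = ((k : ℝ) + 1 + R) ^ m := Real.rpow_natCast _ m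
  have h3 : ((k : ℝ) + 1 + R) ^ m ≤ (((k : ℝ) + 1) * (1 + R)) ^ m := by
    apply pow_le_pow_left₀ (by linarith)
    nlinarith
  have h4 : Real.exp (-(k : ℝ) ^ 2 / c) ≤ q ^ k := by
    rw [hq, ← Real.exp_nat_mul]
    apply Real.exp_le_exp.mpr
    have hkk : (k : ℝ) ≤ (k : ℝ) ^ 2 := by
      have := Nat.le_self_pow (n := 2) (by norm_num) k
      exact_mod_cast this
    have hid : (k : ℝ) * -(1 / c) = -(k : ℝ) / c := by field_simp
    rw [hid, div_le_div_iff_of_pos_right hc]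
    linarith
  have hle : Real.exp (-(k : ℝ) ^ 2 / c) * (C * ((k : ℝ) + 1 + R) ^ d)
      ≤ q ^ k * (C * (((k : ℝ) + 1) * (1 + R)) ^ m) := by
    have hx : ((k : ℝ) + 1 + R) ^ d ≤ (((k : ℝ) + 1) * (1 + R)) ^ m := by
      calc ((k : ℝ) + 1 + R) ^ d ≤ ((k : ℝ) + 1 + R) ^ (m : ℝ) := h1
        _ = ((k : ℝ) + 1 + R) ^ m := h2
        _ ≤ (((k : ℝ) + 1) * (1 + R)) ^ m := h3
    have hexp0 : 0 ≤ Real.exp (-(k : ℝ) ^ 2 / c) := Real.exp_nonneg _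
    have hd0 : 0 ≤ ((k : ℝ) + 1 + R) ^ d := Real.rpow_nonneg (by linarith) d
    gcongr
  refine hle.trans (le_of_eq ?_)
  rw [mul_pow]
  field_simp
  ring

/-- A Gaussian is integrable against a measure of polynomial volume growth. -/
lemma integrable_gaussian_of_growth {E : Type*} [NormedAddCommGroup E]
    [InnerProductSpace ℝ E] [MeasurableSpace E] [BorelSpace E]
    (μ : Measure E) (C d : ℝ) (hC : 0 < C) (hd : 0 ≤ d)
    (hgrowth : ∀ r : ℝ, 1 ≤ r → μ (Metric.closedBall 0 r) ≤ ENNReal.ofReal (C * r ^ d))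
    (c : ℝ) (hc : 0 < c) (x₀ : E) :
    Integrable (fun x => Real.exp (-‖x - x₀‖ ^ 2 / c)) μ := by
  have hcont : Continuous fun x : E => Real.exp (-‖x - x₀‖ ^ 2 / c) := by fun_prop
  refine ⟨hcont.aestronglyMeasurable, ?_⟩
  rw [hasFiniteIntegral_iff_norm]
  set R : ℝ := ‖x₀‖ with hR
  set A : ℕ → Set E := fun k => Metric.closedBall x₀ ((k : ℝ) + 1) \ Metric.ball x₀ (k : ℝ)
    with hA
  have hcover : (Set.univ : Set E) = ⋃ k, A k := by
    ext x
    simp only [Set.mem_univ, Set.mem_iUnion, true_iff]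
    refine ⟨⌊dist x x₀⌋₊, ?_, ?_⟩
    · exact Metric.mem_closedBall.mpr (Nat.lt_floor_add_one _).le
    · simp only [Metric.mem_ball, not_lt]
      exact Nat.floor_le dist_nonneg
  calc ∫⁻ x, ENNReal.ofReal ‖Real.exp (-‖x - x₀‖ ^ 2 / c)‖ ∂μ
      = ∫⁻ x in ⋃ k, A k, ENNReal.ofReal ‖Real.exp (-‖x - x₀‖ ^ 2 / c)‖ ∂μ := by
        rw [← hcover, setLIntegral_univ]
    _ ≤ ∑' k, ∫⁻ x in A k, ENNReal.ofReal ‖Real.exp (-‖x - x₀‖ ^ 2 / c)‖ ∂μ :=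
        lintegral_iUnion_le _ _
    _ ≤ ∑' k : ℕ, ENNReal.ofReal (Real.exp (-(k : ℝ) ^ 2 / c) * (C * ((k : ℝ) + 1 + R) ^ d)) := by
        refine ENNReal.tsum_le_tsum fun k => ?_
        have hstep : ∫⁻ x in A k, ENNReal.ofReal ‖Real.exp (-‖x - x₀‖ ^ 2 / c)‖ ∂μ
            ≤ ∫⁻ _ in A k, ENNReal.ofReal (Real.exp (-(k : ℝ) ^ 2 / c)) ∂μ := by
          refine setLIntegral_mono measurable_const fun x hx => ?_
          refine ENNReal.ofReal_le_ofReal ?_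
          rw [Real.norm_eq_abs, abs_of_pos (Real.exp_pos _)]
          apply Real.exp_le_exp.mpr
          have h1 : (k : ℝ) ≤ dist x x₀ := by
            have := hx.2
            simpa only [Metric.mem_ball, not_lt] using this
          have h2 : (k : ℝ) ^ 2 ≤ ‖x - x₀‖ ^ 2 := by
            rw [← dist_eq_norm]
            exact pow_le_pow_left₀ (Nat.cast_nonneg k) h1 2
          rw [neg_div, neg_div, neg_le_neg_iff]
          exact div_le_div_of_nonneg_right h2 hc.le
        refine hstep.trans ?_
        rw [setLIntegral_const]
        have hsub : Metric.closedBall x₀ ((k : ℝ) + 1) ⊆ Metric.closedBall (0 : E) ((k : ℝ) + 1 + R) := by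
          apply Metric.closedBall_subset_closedBall'
          rw [dist_zero_right, hR]
        have hmeas : μ (A k) ≤ ENNReal.ofReal (C * ((k : ℝ) + 1 + R) ^ d) := by
          refine le_trans (measure_mono Set.diff_subset) (le_trans (measure_mono hsub) (hgrowth _ ?_))
          have h0k : (0:ℝ) ≤ (k:ℝ) := Nat.cast_nonneg k
          have h0R : (0:ℝ) ≤ R := norm_nonneg x₀
          linarith
        calc ENNReal.ofReal (Real.exp (-(k : ℝ) ^ 2 / c)) * μ (A k)
            ≤ ENNReal.ofReal (Real.exp (-(k : ℝ) ^ 2 / c)) *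
              ENNReal.ofReal (C * ((k : ℝ) + 1 + R) ^ d) := by gcongr
          _ = ENNReal.ofReal (Real.exp (-(k : ℝ) ^ 2 / c) * (C * ((k : ℝ) + 1 + R) ^ d)) := by
              rw [← ENNReal.ofReal_mul (Real.exp_nonneg _)]
    _ < ⊤ := by
        have hsum := summable_annulus_bound C R c d hC.le (norm_nonneg x₀) hc hd
        rw [← ENNReal.ofReal_tsum_of_nonneg (fun k => by positivity) hsum]
        exact ENNReal.ofReal_lt_top

/-- Elementary Gaussian bound used for domination. -/
lemma gaussian_deriv_bound (t₀ : ℝ) (ht₀ : 0 < t₀) (r a b : ℝ)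
    (hr : 0 ≤ r) (ha : 0 ≤ a) (hb : 0 ≤ b) (hab : a - b ≤ r) :
    r * b / (2 * t₀) * Real.exp (-r ^ 2 / (4 * t₀)) ≤
      (b * Real.sqrt (8 * t₀) / (2 * t₀) * Real.exp (b ^ 2 / (8 * t₀))) *
        Real.exp (-a ^ 2 / (16 * t₀)) := by
  have h8 : (0:ℝ) < 8 * t₀ := by linarith
  -- Step 1: r ≤ √(8t₀) * exp(r²/(8t₀))
  have e2 : r ^ 2 / (8 * t₀) ≤ Real.exp (r ^ 2 / (8 * t₀)) := by
    have := Real.add_one_le_exp (r ^ 2 / (8 * t₀)); linarith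
  have e3 : (1:ℝ) ≤ Real.exp (r ^ 2 / (8 * t₀)) := Real.one_le_exp (by positivity)
  have h1 : r ≤ Real.sqrt (8 * t₀) * Real.exp (r ^ 2 / (8 * t₀)) := by
    have hsq : r ^ 2 ≤ (Real.sqrt (8 * t₀) * Real.exp (r ^ 2 / (8 * t₀))) ^ 2 := by
      rw [mul_pow, Real.sq_sqrt h8.le]
      have h28 : r ^ 2 ≤ 8 * t₀ * Real.exp (r ^ 2 / (8 * t₀)) := by
        rw [div_le_iff₀ h8] at e2; linarith [e2]
      nlinarith [Real.exp_pos (r ^ 2 / (8 * t₀))]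
    calc r = Real.sqrt (r ^ 2) := (Real.sqrt_sq hr).symm
      _ ≤ Real.sqrt ((Real.sqrt (8 * t₀) * Real.exp (r ^ 2 / (8 * t₀))) ^ 2) :=
          Real.sqrt_le_sqrt hsq
      _ = _ := Real.sqrt_sq (by positivity)
  -- Step 2: a²/2 - b² ≤ r²
  have h2 : a ^ 2 / 2 - b ^ 2 ≤ r ^ 2 := by
    rcases le_or_gt a b with h | h
    · nlinarith [sq_nonneg r]
    · have hr' : a - b ≤ r := hab
      nlinarith [sq_nonneg (a - 2 * b), sq_nonneg (r - (a - b))]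
  -- Combine
  have hexp2 : Real.exp (-r ^ 2 / (8 * t₀)) ≤
      Real.exp (b ^ 2 / (8 * t₀)) * Real.exp (-a ^ 2 / (16 * t₀)) := by
    rw [← Real.exp_add]
    apply Real.exp_le_exp.mpr
    have h16 : (0:ℝ) < 16 * t₀ := by linarith
    rw [div_add_div _ _ (ne_of_gt h8) (ne_of_gt h16), div_le_div_iff₀ h8 (by positivity)]
    nlinarith [h2, ht₀, mul_pos ht₀ ht₀, mul_le_mul_of_nonneg_right h2 (le_of_lt ht₀)]
  calc r * b / (2 * t₀) * Real.exp (-r ^ 2 / (4 * t₀))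
      = b / (2 * t₀) * (r * Real.exp (-r ^ 2 / (4 * t₀))) := by ring
    _ ≤ b / (2 * t₀) * (Real.sqrt (8 * t₀) * Real.exp (r ^ 2 / (8 * t₀)) *
        Real.exp (-r ^ 2 / (4 * t₀))) := by
        have hpos : 0 ≤ b / (2 * t₀) := by positivity
        have : r * Real.exp (-r ^ 2 / (4 * t₀)) ≤
            Real.sqrt (8 * t₀) * Real.exp (r ^ 2 / (8 * t₀)) * Real.exp (-r ^ 2 / (4 * t₀)) := by
          have := Real.exp_pos (-r ^ 2 / (4 * t₀))
          nlinarith [h1]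
        nlinarith [hpos, this]
    _ = b * Real.sqrt (8 * t₀) / (2 * t₀) * Real.exp (-r ^ 2 / (8 * t₀)) := by
        rw [mul_assoc (Real.sqrt (8 * t₀)), ← Real.exp_add]
        have harg : r ^ 2 / (8 * t₀) + -r ^ 2 / (4 * t₀) = -r ^ 2 / (8 * t₀) := by
          field_simp; ring
        rw [harg]; ring
    _ ≤ b * Real.sqrt (8 * t₀) / (2 * t₀) *
        (Real.exp (b ^ 2 / (8 * t₀)) * Real.exp (-a ^ 2 / (16 * t₀))) := by
        have hpos : 0 ≤ b * Real.sqrt (8 * t₀) / (2 * t₀) := by positivity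
        exact mul_le_mul_of_nonneg_left hexp2 hpos
    _ = _ := by ring

/-- The (real-valued) `F`-functional with dimension parameter `n` of a Borel measure `μ`
on a finite-dimensional Euclidean space `E`:
`F^{(n)}_{x₀,t₀}(μ) = (4π t₀)^{-n/2} ∫_E exp(-‖x-x₀‖²/(4t₀)) dμ(x)`. -/
noncomputable def FmeasR (n : ℕ) {E : Type*} [NormedAddCommGroup E] [InnerProductSpace ℝ E]
    [MeasurableSpace E] (μ : Measure E) (x₀ : E) (t₀ : ℝ) : ℝ :=
  (4 * Real.pi * t₀) ^ (-(n : ℝ) / 2) *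
    ∫ x, Real.exp (-‖x - x₀‖ ^ 2 / (4 * t₀)) ∂μ

/-- Variation of the `F`-functional in the base point: if `μ` has polynomial volume
growth, then for fixed `t₀ > 0`, `x₀ ∈ E` and direction `y ∈ E`, the function
`s ↦ F^{(n)}_{x₀ + s y, t₀}(μ)` is differentiable at `s = 0` with derivative
`(4π t₀)^{-n/2} ∫ (⟨x-x₀, y⟩/(2t₀)) exp(-‖x-x₀‖²/(4t₀)) dμ(x)`. -/
theorem F_basepoint_derivative (n : ℕ) {E : Type*} [NormedAddCommGroup E]
    [InnerProductSpace ℝ E] [FiniteDimensional ℝ E] [MeasurableSpace E] [BorelSpace E]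
    (μ : Measure E) (C d : ℝ) (hC : 0 < C) (hd : 0 ≤ d)
    (hgrowth : ∀ r : ℝ, 1 ≤ r → μ (Metric.closedBall 0 r) ≤ ENNReal.ofReal (C * r ^ d))
    (t₀ : ℝ) (ht₀ : 0 < t₀) (x₀ y : E) :
    HasDerivAt (fun s : ℝ => FmeasR n μ (x₀ + s • y) t₀)
      ((4 * Real.pi * t₀) ^ (-(n : ℝ) / 2) *
        ∫ x, (⟪x - x₀, y⟫ / (2 * t₀)) * Real.exp (-‖x - x₀‖ ^ 2 / (4 * t₀)) ∂μ)
      0 := by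
  set F : ℝ → E → ℝ := fun s x => Real.exp (-‖x - (x₀ + s • y)‖ ^ 2 / (4 * t₀)) with hF
  set F' : ℝ → E → ℝ := fun s x =>
    (⟪x - (x₀ + s • y), y⟫ / (2 * t₀)) * Real.exp (-‖x - (x₀ + s • y)‖ ^ 2 / (4 * t₀)) with hF'
  set K : ℝ := ‖y‖ * Real.sqrt (8 * t₀) / (2 * t₀) * Real.exp (‖y‖ ^ 2 / (8 * t₀)) with hK
  set bound : E → ℝ := fun x => K * Real.exp (-‖x - x₀‖ ^ 2 / (16 * t₀)) with hbound
  -- measurability of F s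
  have hF_meas : ∀ᶠ s in nhds (0 : ℝ), AEStronglyMeasurable (F s) μ := by
    refine Filter.Eventually.of_forall fun s => ?_
    exact (Continuous.aestronglyMeasurable (by fun_prop))
  -- integrability of F 0
  have hF_int : Integrable (F 0) μ := by
    have h := integrable_gaussian_of_growth μ C d hC hd hgrowth (4 * t₀) (by linarith) x₀
    refine h.congr (Filter.Eventually.of_forall fun x => ?_)
    simp [hF]
  -- measurability of F' 0
  have hF'_meas : AEStronglyMeasurable (F' 0) μ := by
    refine Continuous.aestronglyMeasurable ?_
    apply Continuous.mul
    · exact ((continuous_id.sub continuous_const).inner continuous_const).div_const _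
    · fun_prop
  -- the bound
  have h_bound : ∀ᵐ x ∂μ, ∀ s ∈ Metric.ball (0 : ℝ) 1, ‖F' s x‖ ≤ bound x := by
    refine Filter.Eventually.of_forall fun x s hs => ?_
    have hs1 : |s| ≤ 1 := by
      have := Metric.mem_ball.mp hs
      rw [Real.dist_eq, sub_zero] at this
      exact this.le
    set w : E := x - (x₀ + s • y) with hw
    have hcs : |⟪w, y⟫| ≤ ‖w‖ * ‖y‖ := abs_real_inner_le_norm w y
    have hab : ‖x - x₀‖ - ‖y‖ ≤ ‖w‖ := by
      have hxw : x - x₀ = w + s • y := by rw [hw]; abel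
      have : ‖x - x₀‖ ≤ ‖w‖ + ‖s • y‖ := by rw [hxw]; exact norm_add_le _ _
      have hsy : ‖s • y‖ ≤ ‖y‖ := by
        rw [norm_smul, Real.norm_eq_abs]
        calc |s| * ‖y‖ ≤ 1 * ‖y‖ := by gcongr
          _ = ‖y‖ := one_mul _
      linarith
    have hnorm : ‖F' s x‖ = |⟪w, y⟫| / (2 * t₀) * Real.exp (-‖w‖ ^ 2 / (4 * t₀)) := by
      rw [hF']
      simp only [Real.norm_eq_abs, abs_mul, abs_div, abs_of_pos (Real.exp_pos _),
        abs_of_pos (show (0:ℝ) < 2 * t₀ by linarith)]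
      rw [hw]
    rw [hnorm, hbound, hK]
    calc |⟪w, y⟫| / (2 * t₀) * Real.exp (-‖w‖ ^ 2 / (4 * t₀))
        ≤ ‖w‖ * ‖y‖ / (2 * t₀) * Real.exp (-‖w‖ ^ 2 / (4 * t₀)) := by
          gcongr
      _ ≤ (‖y‖ * Real.sqrt (8 * t₀) / (2 * t₀) * Real.exp (‖y‖ ^ 2 / (8 * t₀))) *
          Real.exp (-‖x - x₀‖ ^ 2 / (16 * t₀)) :=
        gaussian_deriv_bound t₀ ht₀ ‖w‖ ‖x - x₀‖ ‖y‖ (norm_nonneg _) (norm_nonneg _)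
          (norm_nonneg _) hab
  -- integrability of the bound
  have hbound_int : Integrable bound μ :=
    (integrable_gaussian_of_growth μ C d hC hd hgrowth (16 * t₀) (by linarith) x₀).const_mul K
  -- differentiability
  have h_diff : ∀ᵐ x ∂μ, ∀ s ∈ Metric.ball (0 : ℝ) 1, HasDerivAt (F · x) (F' s x) s := by
    refine Filter.Eventually.of_forall fun x s _ => ?_
    set v : E := x - x₀ with hv
    set A : ℝ := ⟪v, y⟫ with hA
    set B : ℝ := ‖y‖ ^ 2 with hB
    have key : ∀ u : ℝ, ‖x - (x₀ + u • y)‖ ^ 2 = ‖v‖ ^ 2 - u * (2 * A) + u ^ 2 * B := by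
      intro u
      have hxu : x - (x₀ + u • y) = v - u • y := by rw [hv]; abel
      rw [hxu, norm_sub_sq_real, real_inner_smul_right, norm_smul, mul_pow,
        Real.norm_eq_abs, sq_abs, hA, hB]
      ring
    have hgderiv : HasDerivAt
        (fun u : ℝ => (-(‖v‖ ^ 2 - u * (2 * A) + u ^ 2 * B)) / (4 * t₀))
        ((-((0 : ℝ) - 1 * (2 * A) + (2 : ℕ) * s ^ (2 - 1) * B)) / (4 * t₀)) s := by
      have h3 : HasDerivAt (fun u : ℝ => ‖v‖ ^ 2 - u * (2 * A) + u ^ 2 * B)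
          ((0 : ℝ) - 1 * (2 * A) + (2 : ℕ) * s ^ (2 - 1) * B) s :=
        (((hasDerivAt_const s (‖v‖ ^ 2)).sub ((hasDerivAt_id s).mul_const (2 * A))).add
          ((hasDerivAt_pow 2 s).mul_const B))
      exact h3.neg.div_const (4 * t₀)
    have hexp := hgderiv.exp
    have hfun : (fun u : ℝ => Real.exp ((-(‖v‖ ^ 2 - u * (2 * A) + u ^ 2 * B)) / (4 * t₀)))
        = fun u => F u x := by
      funext u
      rw [hF]
      simp only
      rw [key u]
    rw [hfun] at hexp
    convert hexp using 1
    have hinner : ⟪x - (x₀ + s • y), y⟫ = A - s * B := by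
      have hxu : x - (x₀ + s • y) = v - s • y := by rw [hv]; abel
      rw [hxu, inner_sub_left, real_inner_smul_left, hA, hB, real_inner_self_eq_norm_sq]
    rw [hF']
    simp only
    rw [hinner, key s]
    push_cast
    have ht₀' : (2 : ℝ) * t₀ ≠ 0 := by positivity
    have ht₀'' : (4 : ℝ) * t₀ ≠ 0 := by positivity
    field_simp
    ring
  -- apply the dominated convergence theorem for derivatives
  have main := hasDerivAt_integral_of_dominated_loc_of_deriv_le (F := F) (F' := F')
    (bound := bound) (Metric.ball_mem_nhds 0 one_pos) hF_meas hF_int hF'_meas h_bound hbound_int h_diff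
  have hder := main.2.const_mul ((4 * Real.pi * t₀) ^ (-(n : ℝ) / 2))
  have hint_eq : ∫ x, F' 0 x ∂μ
      = ∫ x, (⟪x - x₀, y⟫ / (2 * t₀)) * Real.exp (-‖x - x₀‖ ^ 2 / (4 * t₀)) ∂μ := by
    refine integral_congr_ae (Filter.Eventually.of_forall fun x => ?_)
    rw [hF']
    simp
  rw [hint_eq] at hder
  exact hder
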